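/- Let S = {1,…,m} be a finite set, q a pmf on S with q(i) > 0 for all i, d > 0, and c : S → ℝ. Let A = { pmf p : p(i)/q(i) ≤ 1+d for all i } and define d̃(i, λ_i, ν) ∈ ℝ ∪ {+∞} by: d̃ = ν if λ_i = 0 and c(i) ≤ ν; d̃ = (1+d)·λ_i·exp((c(i) − λ_i − ν)/λ_i) + ν if λ_i > 0; and d̃ = +∞ if λ_i = 0 and c(i) > ν. Then strong duality holds: max_{p ∈ A} Σ_{i∈S} p(i)·c(i) = inf_{λ ∈ (ℝ≥0)^m, ν ∈ ℝ} Σ_{i∈S} q(i)·d̃(i, λ_i, ν). -/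

import Mathlib

/-- The extended-real-valued dual integrand `d̃` of the paper. -/
noncomputable def dualIntegrand (d b l ν : ℝ) : EReal :=
  if l = 0 then (if b ≤ ν then ((ν : ℝ) : EReal) else ⊤)
  else (((1 + d) * l * Real.exp ((b - l - ν) / l) + ν : ℝ) : EReal)

private lemma ecoe_sum {α : Type*} (s : Finset α) (f : α → ℝ) :
    ((∑ i ∈ s, f i : ℝ) : EReal) = ∑ i ∈ s, ((f i : ℝ) : EReal) := by
  induction s using Finset.cons_induction with
  | empty => simp
  | cons a s ha ih => rw [Finset.sum_cons, Finset.sum_cons, EReal.coe_add, ih]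

/-- Real-valued lower bound for the dual integrand. -/
private lemma dualIntegrand_ge (d : ℝ) (hd : 0 < d) (b l ν : ℝ) (hl : 0 ≤ l) :
    ((ν + (1 + d) * max (b - ν) 0 : ℝ) : EReal) ≤ dualIntegrand d b l ν := by
  unfold dualIntegrand
  rcases eq_or_lt_of_le hl with h0 | hpos
  · rw [if_pos h0.symm]
    by_cases hb : b ≤ ν
    · rw [if_pos hb, max_eq_right (by linarith)]
      norm_num
    · rw [if_neg hb]; exact le_top
  · rw [if_neg (ne_of_gt hpos), EReal.coe_le_coe_iff]
    have hexp : (b - ν) / l ≤ Real.exp ((b - ν) / l - 1) := by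
      have := Real.add_one_le_exp ((b - ν) / l - 1)
      linarith
    have harg : (b - l - ν) / l = (b - ν) / l - 1 := by
      field_simp
      ring
    rw [harg]
    have h1d : (0:ℝ) < 1 + d := by linarith
    rcases le_or_gt (b - ν) 0 with hb | hb
    · rw [max_eq_right hb]
      have : 0 ≤ (1 + d) * l * Real.exp ((b - ν) / l - 1) :=
        mul_nonneg (mul_nonneg (le_of_lt h1d) hl) (Real.exp_nonneg _)
      linarith
    · rw [max_eq_left (le_of_lt hb)]
      have : b - ν ≤ l * Real.exp ((b - ν) / l - 1) := by
        have := mul_le_mul_of_nonneg_left hexp (le_of_lt hpos)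
        rwa [mul_div_cancel₀ _ (ne_of_gt hpos)] at this
      nlinarith
/-- Pointwise equality at the optimal multiplier. -/
private lemma dualIntegrand_eq (d b ν : ℝ) :
    dualIntegrand d b (max (b - ν) 0) ν = ((ν + (1 + d) * max (b - ν) 0 : ℝ) : EReal) := by
  unfold dualIntegrand
  rcases le_or_gt b ν with hb | hb
  · rw [max_eq_right (by linarith), if_pos rfl, if_pos hb]
    norm_num
  · have hl : max (b - ν) 0 = b - ν := max_eq_left (by linarith)
    rw [hl, if_neg (by intro h; linarith : ¬ (b - ν = 0))]
    have : (b - (b - ν) - ν) / (b - ν) = 0 := by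
      rw [show b - (b - ν) - ν = 0 by ring, zero_div]
    rw [this, Real.exp_zero]
    exact EReal.coe_eq_coe_iff.2 (by ring)

theorem strong_duality_worst_case_expectation
    (m : ℕ) (q : Fin m → ℝ) (hq0 : ∀ i, 0 < q i) (hq1 : ∑ i, q i = 1)
    (d : ℝ) (hd : 0 < d) (c : Fin m → ℝ) :
    let A : Set (Fin m → ℝ) :=
      {p | (∀ i, 0 ≤ p i) ∧ ∑ i, p i = 1 ∧ ∀ i, p i / q i ≤ 1 + d}
    ∃ p ∈ A, (∀ p' ∈ A, ∑ i, p' i * c i ≤ ∑ i, p i * c i) ∧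
      ((∑ i, p i * c i : ℝ) : EReal)
        = ⨅ (l : Fin m → ℝ) (_ : ∀ i, 0 ≤ l i) (ν : ℝ),
            ∑ i, ((q i : EReal) * dualIntegrand d (c i) (l i) ν) := by
  intro A
  have h1d : (0:ℝ) < 1 + d := by linarith
  -- m is positive
  have hm : 0 < m := by
    rcases Nat.eq_zero_or_pos m with h | h
    · exfalso; subst h; simp at hq1
    · exact h
  haveI : Nonempty (Fin m) := ⟨⟨0, hm⟩⟩
  -- splitting of upper-tail sums
  have hsplit : ∀ ν : ℝ,
      ∑ i ∈ Finset.univ.filter (fun i => ν ≤ c i), q i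
      = (∑ i ∈ Finset.univ.filter (fun i => ν < c i), q i)
        + ∑ i ∈ Finset.univ.filter (fun i => c i = ν), q i := by
    intro ν
    rw [← Finset.sum_union]
    · congr 1
      ext i
      simp only [Finset.mem_filter, Finset.mem_union, Finset.mem_univ, true_and]
      constructor
      · intro h
        rcases eq_or_lt_of_le h with h' | h'
        · exact Or.inr h'.symm
        · exact Or.inl h'
      · rintro (h | h)
        · exact le_of_lt h
        · exact le_of_eq h.symm
    · rw [Finset.disjoint_left]
      intro i hi hi'
      simp only [Finset.mem_filter] at hi hi'
      linarith [hi.2, hi'.2.le]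
  -- the quantile set
  set T : Finset ℝ := (Finset.univ.image c).filter
      (fun x => 1 ≤ (1 + d) * ∑ i ∈ Finset.univ.filter (fun i => x ≤ c i), q i) with hT
  have hTne : T.Nonempty := by
    obtain ⟨i₀, -, hmin⟩ := Finset.exists_min_image Finset.univ c ⟨⟨0, hm⟩, Finset.mem_univ _⟩
    refine ⟨c i₀, Finset.mem_filter.2 ⟨Finset.mem_image_of_mem c (Finset.mem_univ _), ?_⟩⟩
    have : Finset.univ.filter (fun i => c i₀ ≤ c i) = Finset.univ := by
      ext i; simp [hmin i (Finset.mem_univ i)]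
    rw [this, hq1]
    linarith
  set ν : ℝ := T.max' hTne with hν
  have hνT : ν ∈ T := T.max'_mem hTne
  obtain ⟨hνim, hνge⟩ := Finset.mem_filter.1 hνT
  -- s, t
  set s : ℝ := ∑ i ∈ Finset.univ.filter (fun i => ν < c i), q i with hs
  set t : ℝ := ∑ i ∈ Finset.univ.filter (fun i => c i = ν), q i with ht
  have hst : 1 ≤ (1 + d) * (s + t) := by rw [← hsplit]; exact hνge
  have htpos : 0 < t := by
    obtain ⟨i₀, -, hci₀⟩ := Finset.mem_image.1 hνim
    have hi₀ : i₀ ∈ Finset.univ.filter (fun i => c i = ν) := by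
      simp [hci₀]
    calc 0 < q i₀ := hq0 i₀
    _ ≤ t := Finset.single_le_sum (fun i _ => (hq0 i).le) hi₀
  have hs1 : (1 + d) * s ≤ 1 := by
    by_contra hcon
    push_neg at hcon
    -- then the strict-tail set is nonempty
    have hEne : (Finset.univ.filter (fun i => ν < c i)).Nonempty := by
      rcases Finset.eq_empty_or_nonempty (Finset.univ.filter (fun i => ν < c i)) with h | h
      · exfalso; rw [hs, h, Finset.sum_empty, mul_zero] at hcon; linarith
      · exact h
    obtain ⟨j, hj, hjmin⟩ := Finset.exists_min_image _ c hEne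
    have hjν : ν < c j := (Finset.mem_filter.1 hj).2
    have heq : Finset.univ.filter (fun i => c j ≤ c i)
        = Finset.univ.filter (fun i => ν < c i) := by
      ext i
      simp only [Finset.mem_filter, Finset.mem_univ, true_and]
      constructor
      · intro h; linarith
      · intro h; exact hjmin i (Finset.mem_filter.2 ⟨Finset.mem_univ i, h⟩)
    have hjT : c j ∈ T := by
      refine Finset.mem_filter.2 ⟨Finset.mem_image_of_mem c (Finset.mem_univ _), ?_⟩
      rw [heq]; exact le_of_lt hcon
    have := T.le_max' _ hjT
    rw [← hν] at this
    linarith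
  set r : ℝ := 1 - (1 + d) * s with hr
  have hr0 : 0 ≤ r := by rw [hr]; linarith
  have hrt : r ≤ (1 + d) * t := by rw [hr]; nlinarith
  -- the optimal primal point
  set p : Fin m → ℝ := fun i =>
    if ν < c i then (1 + d) * q i else if c i = ν then (r / t) * q i else 0 with hp
  -- generic sum computation
  have hpsum : ∀ g : Fin m → ℝ,
      ∑ i, p i * g i = (1 + d) * (∑ i ∈ Finset.univ.filter (fun i => ν < c i), q i * g i)
        + (r / t) * ∑ i ∈ Finset.univ.filter (fun i => c i = ν), q i * g i := by
    intro g
    rw [← Finset.sum_filter_add_sum_filter_not Finset.univ (fun i => ν < c i) (fun i => p i * g i)]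
    rw [← Finset.sum_filter_add_sum_filter_not (Finset.univ.filter (fun i => ¬ ν < c i))
      (fun i => c i = ν) (fun i => p i * g i)]
    have e1 : ∑ i ∈ Finset.univ.filter (fun i => ν < c i), p i * g i
        = (1 + d) * ∑ i ∈ Finset.univ.filter (fun i => ν < c i), q i * g i := by
      rw [Finset.mul_sum]
      refine Finset.sum_congr rfl fun i hi => ?_
      have := (Finset.mem_filter.1 hi).2
      simp only [hp, if_pos this]; ring
    have e2 : ∑ i ∈ (Finset.univ.filter (fun i => ¬ ν < c i)).filter (fun i => c i = ν), p i * g i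
        = (r / t) * ∑ i ∈ Finset.univ.filter (fun i => c i = ν), q i * g i := by
      have : (Finset.univ.filter (fun i => ¬ ν < c i)).filter (fun i => c i = ν)
          = Finset.univ.filter (fun i => c i = ν) := by
        ext i
        simp only [Finset.mem_filter, Finset.mem_univ, true_and]
        constructor
        · exact fun h => h.2
        · intro h; exact ⟨by rw [h]; exact lt_irrefl ν, h⟩
      rw [this, Finset.mul_sum]
      refine Finset.sum_congr rfl fun i hi => ?_
      have hi' := (Finset.mem_filter.1 hi).2
      simp only [hp, if_neg (show ¬ ν < c i by rw [hi']; exact lt_irrefl ν), if_pos hi']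
      ring
    have e3 : ∑ i ∈ (Finset.univ.filter (fun i => ¬ ν < c i)).filter (fun i => ¬ c i = ν),
        p i * g i = 0 := by
      refine Finset.sum_eq_zero fun i hi => ?_
      simp only [Finset.mem_filter, Finset.mem_univ, true_and] at hi
      simp only [hp]
      rw [if_neg hi.1, if_neg hi.2, zero_mul]
    rw [e1, e2, e3]; ring
  -- p is feasible
  have hp0 : ∀ i, 0 ≤ p i := by
    intro i
    simp only [hp]
    split_ifs
    · exact mul_nonneg h1d.le (hq0 i).le
    · exact mul_nonneg (div_nonneg hr0 htpos.le) (hq0 i).le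
    · exact le_refl 0
  have hpsum1 : ∑ i, p i = 1 := by
    have := hpsum (fun _ => 1)
    simp only [mul_one] at this
    rw [this, ← hs, ← ht, div_mul_cancel₀ _ (ne_of_gt htpos), hr]
    ring
  have hpdiv : ∀ i, p i / q i ≤ 1 + d := by
    intro i
    rw [div_le_iff₀ (hq0 i)]
    simp only [hp]
    split_ifs with h1 h2
    · exact le_refl _
    · have : r / t ≤ 1 + d := (div_le_iff₀ htpos).2 (by linarith [hrt])
      exact mul_le_mul_of_nonneg_right this (hq0 i).le
    · exact mul_nonneg h1d.le (hq0 i).le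
  have hpA : p ∈ A := ⟨hp0, hpsum1, hpdiv⟩
  -- value of p equals h(ν)
  have hval : ∑ i, p i * c i
      = ν + (1 + d) * ∑ i, q i * max (c i - ν) 0 := by
    rw [hpsum c]
    have e1 : ∑ i ∈ Finset.univ.filter (fun i => c i = ν), q i * c i = t * ν := by
      rw [ht, Finset.sum_mul]
      refine Finset.sum_congr rfl fun i hi => ?_
      rw [(Finset.mem_filter.1 hi).2]
    have e2 : ∑ i, q i * max (c i - ν) 0
        = ∑ i ∈ Finset.univ.filter (fun i => ν < c i), q i * (c i - ν) := by
      rw [← Finset.sum_filter_add_sum_filter_not Finset.univ (fun i => ν < c i)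
        (fun i => q i * max (c i - ν) 0)]
      have z : ∑ i ∈ Finset.univ.filter (fun i => ¬ ν < c i), q i * max (c i - ν) 0 = 0 := by
        refine Finset.sum_eq_zero fun i hi => ?_
        have := (Finset.mem_filter.1 hi).2
        rw [max_eq_right (by push_neg at this; linarith)]
        ring
      rw [z, add_zero]
      refine Finset.sum_congr rfl fun i hi => ?_
      have := (Finset.mem_filter.1 hi).2
      rw [max_eq_left (by linarith)]
    rw [e1, e2]
    have hEsub : ∑ i ∈ Finset.univ.filter (fun i => ν < c i), q i * (c i - ν)
        = (∑ i ∈ Finset.univ.filter (fun i => ν < c i), q i * c i) - s * ν := by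
      rw [hs, Finset.sum_mul, ← Finset.sum_sub_distrib]
      exact Finset.sum_congr rfl fun i _ => by ring
    have e4 : r / t * (t * ν) = r * ν := by
      field_simp
    rw [hEsub, e4, hr]
    ring
  -- weak duality at the real level
  have hweak : ∀ p' ∈ A, ∀ ν' : ℝ,
      ∑ i, p' i * c i ≤ ν' + (1 + d) * ∑ i, q i * max (c i - ν') 0 := by
    rintro p' ⟨hp'0, hp'1, hp'd⟩ ν'
    have key : ∀ i, p' i * c i ≤ p' i * ν' + (1 + d) * (q i * max (c i - ν') 0) := by
      intro i
      have hple : p' i ≤ (1 + d) * q i := by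
        have := (div_le_iff₀ (hq0 i)).1 (hp'd i)
        linarith
      rcases le_or_gt (c i) ν' with hc | hc
      · rw [max_eq_right (by linarith)]
        nlinarith [hp'0 i]
      · rw [max_eq_left (by linarith)]
        nlinarith [hq0 i]
    calc ∑ i, p' i * c i ≤ ∑ i, (p' i * ν' + (1 + d) * (q i * max (c i - ν') 0)) :=
          Finset.sum_le_sum fun i _ => key i
      _ = (∑ i, p' i) * ν' + (1 + d) * ∑ i, q i * max (c i - ν') 0 := by
          rw [Finset.sum_add_distrib, ← Finset.sum_mul, Finset.mul_sum]
      _ = ν' + (1 + d) * ∑ i, q i * max (c i - ν') 0 := by rw [hp'1, one_mul]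
  refine ⟨p, hpA, ?_, ?_⟩
  · intro p' hp'
    calc ∑ i, p' i * c i ≤ ν + (1 + d) * ∑ i, q i * max (c i - ν) 0 := hweak p' hp' ν
      _ = ∑ i, p i * c i := hval.symm
  · -- EReal equality
    apply le_antisymm
    · -- ≤ : weak duality, coe is a lower bound
      refine le_iInf fun l => le_iInf fun hl => le_iInf fun ν' => ?_
      have step1 : ((∑ i, p i * c i : ℝ) : EReal)
          ≤ ((∑ i, q i * (ν' + (1 + d) * max (c i - ν') 0) : ℝ) : EReal) := by
        rw [EReal.coe_le_coe_iff]
        have : ∑ i, q i * (ν' + (1 + d) * max (c i - ν') 0)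
            = ν' + (1 + d) * ∑ i, q i * max (c i - ν') 0 := by
          rw [Finset.mul_sum]
          have : ∀ i, q i * (ν' + (1 + d) * max (c i - ν') 0)
              = q i * ν' + (1 + d) * (q i * max (c i - ν') 0) := fun i => by ring
          rw [Finset.sum_congr rfl fun i _ => this i, Finset.sum_add_distrib,
            ← Finset.sum_mul, hq1, one_mul, ← Finset.mul_sum]
        rw [this]
        exact hweak p hpA ν'
      refine le_trans step1 ?_
      rw [ecoe_sum]
      refine Finset.sum_le_sum fun i _ => ?_
      -- pointwise: coe (q i * h i) ≤ (q i) * d̃ i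
      have hge := dualIntegrand_ge d hd (c i) (l i) ν' (hl i)
      unfold dualIntegrand at hge ⊢
      split_ifs at hge ⊢ with h1 h2
      · rw [← EReal.coe_mul, EReal.coe_le_coe_iff]
        exact mul_le_mul_of_nonneg_left (EReal.coe_le_coe_iff.1 hge) (hq0 i).le
      · rw [EReal.coe_mul_top_of_pos (hq0 i)]
        exact le_top
      · rw [← EReal.coe_mul, EReal.coe_le_coe_iff]
        exact mul_le_mul_of_nonneg_left (EReal.coe_le_coe_iff.1 hge) (hq0 i).le
    · -- ≥ : inf attains the value at λ* = max (c i - ν) 0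
      have h1 := iInf_le (fun l : Fin m → ℝ =>
          ⨅ (_ : ∀ i, 0 ≤ l i) (ν' : ℝ), ∑ i, ((q i : EReal) * dualIntegrand d (c i) (l i) ν'))
        (fun i => max (c i - ν) 0)
      refine le_trans h1 ?_
      refine le_trans (iInf_le _ (fun i => le_max_right _ _)) ?_
      refine le_trans (iInf_le _ ν) ?_
      have h2 : ∑ i, ((q i : EReal) * dualIntegrand d (c i) (max (c i - ν) 0) ν)
          = ((∑ i, q i * (ν + (1 + d) * max (c i - ν) 0) : ℝ) : EReal) := by
        rw [ecoe_sum]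
        refine Finset.sum_congr rfl fun i _ => ?_
        rw [dualIntegrand_eq, ← EReal.coe_mul]
      rw [h2, EReal.coe_le_coe_iff]
      have h3 : ∑ i, q i * (ν + (1 + d) * max (c i - ν) 0)
          = ν + (1 + d) * ∑ i, q i * max (c i - ν) 0 := by
        have : ∀ i, q i * (ν + (1 + d) * max (c i - ν) 0)
            = q i * ν + (1 + d) * (q i * max (c i - ν) 0) := fun i => by ring
        rw [Finset.sum_congr rfl fun i _ => this i, Finset.sum_add_distrib,
          ← Finset.sum_mul, hq1, one_mul, ← Finset.mul_sum]
      rw [h3, hval]
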